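/- For every k ≥ 0, ω((a-b)^k·b) = (a-b)^k·(b - (-y)^{k+1}·a) in ℤ[y]⟨a,b⟩. -/

import Mathlib

open Polynomial

noncomputable section

/-- The coefficient ring `ℤ[y]`. -/
abbrev NCR : Type := Polynomial ℤ

/-- The ring `ℤ[y]⟨a,b⟩` of noncommutative polynomials in the letters `a` (encoded `false`)
and `b` (encoded `true`) with coefficients in `ℤ[y]`. -/
abbrev NCPoly : Type := MonoidAlgebra NCR (FreeMonoid Bool)

/-- The variable `a`. -/
def Aa : NCPoly := MonoidAlgebra.of NCR (FreeMonoid Bool) (FreeMonoid.of false)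

/-- The variable `b`. -/
def Bb : NCPoly := MonoidAlgebra.of NCR (FreeMonoid Bool) (FreeMonoid.of true)

/-- The `ω`-transformation on a single `ab`-monomial (word in `a`,`b`): every occurrence of
the factor `ab` is replaced by `(1+y)ab + (y+y²)ba`, and then all remaining occurrences of `a`
are replaced by `a+yb` and of `b` by `b+ya`. -/
def omegaWord : List Bool → NCPoly
  | [] => 1
  | false :: true :: rest =>
      (((1 + X : NCR)) • (Aa * Bb) + ((X + X ^ 2 : NCR)) • (Bb * Aa)) * omegaWord rest
  | false :: rest => (Aa + (X : NCR) • Bb) * omegaWord rest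
  | true :: rest => (Bb + (X : NCR) • Aa) * omegaWord rest

/-- The `ω`-transformation on `ℤ[y]⟨a,b⟩`, extended linearly from `ab`-monomials. -/
def omega (f : NCPoly) : NCPoly :=
  (MonoidAlgebra.coeff f : FreeMonoid Bool →₀ NCR).sum fun w c => c • omegaWord (FreeMonoid.toList w)

/-- The `ι`-transformation on `ℤ[y]⟨a,b⟩`: it removes the initial letter from every
`ab`-monomial (and kills the empty monomial). -/
def iota (f : NCPoly) : NCPoly :=
  (MonoidAlgebra.coeff f : FreeMonoid Bool →₀ NCR).sum fun w c =>
    match FreeMonoid.toList w with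
    | [] => 0
    | _ :: rest => c • MonoidAlgebra.of NCR (FreeMonoid Bool) (FreeMonoid.ofList rest)

/-- `wt_S(a,b) = w_0 ⋯ w_{n-1}` where `w_k = b` if `k ∈ S` and `w_k = a - b` otherwise. -/
def wtS (n : ℕ) (S : Finset ℕ) : NCPoly :=
  ((List.range n).map fun j => if j ∈ S then Bb else Aa - Bb).prod

/-- Evaluation `f(y,a,b) ↦ f(-x,1,x)` used to define (augmented) Chow polynomials. -/
def evalChow (f : NCPoly) : Polynomial ℤ :=
  (MonoidAlgebra.coeff f : FreeMonoid Bool →₀ NCR).sum fun w c =>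
    c.comp (-X) * X ^ ((FreeMonoid.toList w).count true)

/-- The `ab`-monomial `m_T = m_0 ⋯ m_{n-1}` with `m_i = b` if `i ∈ T` and `m_i = a` else. -/
def mT (n : ℕ) (T : Finset ℕ) : FreeMonoid Bool :=
  FreeMonoid.ofList ((List.range n).map fun i => decide (i ∈ T))

variable {P : Type*} [Fintype P] [PartialOrder P]

open Classical in
/-- The Möbius function of a finite poset:
`μ(w,w) = 1` and `μ(u,w) = -∑_{u ≤ v < w} μ(u,v)` for `u ≠ w`. -/
def mobius (u : P) : P → ℤ
  | w =>
    if u = w then 1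
    else - ∑ v ∈ (Finset.univ.filter fun v : P => u ≤ v ∧ v < w).attach, mobius u v.1
  termination_by w => (Finset.univ.filter fun v : P => u ≤ v ∧ v ≤ w).card
  decreasing_by
    have hv := v.2
    simp only [Finset.mem_filter, Finset.mem_univ, true_and] at hv
    apply Finset.card_lt_card
    constructor
    · intro x hx
      simp only [Finset.mem_filter, Finset.mem_univ, true_and] at hx ⊢
      exact ⟨hx.1, hx.2.trans hv.2.le⟩
    · intro hsub
      have hw : w ∈ Finset.univ.filter fun v : P => u ≤ v ∧ v ≤ w := by
        simp only [Finset.mem_filter, Finset.mem_univ, true_and]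
        exact ⟨hv.1.trans hv.2.le, le_refl w⟩
      have := hsub hw
      simp only [Finset.mem_filter, Finset.mem_univ, true_and] at this
      exact absurd (lt_of_le_of_lt this.2 hv.2) (lt_irrefl w)

open Classical in
/-- The Poincaré polynomial of the interval `[u,w]`, with respect to the rank function `rk`:
`Poin_{[u,w]}(y) = ∑_{u ≤ v ≤ w} μ(u,v)·(-y)^{rk(v) - rk(u)}`. -/
def poin (rk : P → ℕ) (u w : P) : Polynomial ℤ :=
  ∑ v ∈ Finset.univ.filter fun v : P => u ≤ v ∧ v ≤ w,
    mobius u v • (-X : Polynomial ℤ) ^ (rk v - rk u)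

variable [BoundedOrder P]

open Classical in
/-- The extended `ab`-index of the interval `[u₀, ⊤]` of `P` (with ranks taken relative
to `u₀`): the sum over all chains `u₀ ≤ C_1 < ⋯ < C_k < C_{k+1} = ⊤` of
`Poin_{P,C}(y)·wt_C(a,b)`. -/
def exPsiFrom (rk : P → ℕ) (u₀ : P) : NCPoly :=
  ∑ k ∈ Finset.range (Fintype.card P),
    ∑ c ∈ Finset.univ.filter fun c : Fin (k + 1) → P =>
        StrictMono c ∧ c (Fin.last k) = (⊤ : P) ∧ u₀ ≤ c 0,
      (∏ i : Fin k, poin rk (c i.castSucc) (c i.succ)) •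
        wtS (rk (⊤ : P) - rk u₀) (Finset.univ.image fun i : Fin k => rk (c i.castSucc) - rk u₀)

open Classical in
/-- The `ab`-index of the interval `[u₀, ⊤]` of `P`: the sum over all chains
`u₀ ≤ C_1 < ⋯ < C_k < C_{k+1} = ⊤` of `wt_C(a,b)`. -/
def psiFrom (rk : P → ℕ) (u₀ : P) : NCPoly :=
  ∑ k ∈ Finset.range (Fintype.card P),
    ∑ c ∈ Finset.univ.filter fun c : Fin (k + 1) → P =>
        StrictMono c ∧ c (Fin.last k) = (⊤ : P) ∧ u₀ ≤ c 0,
      wtS (rk (⊤ : P) - rk u₀) (Finset.univ.image fun i : Fin k => rk (c i.castSucc) - rk u₀)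

/-- `exΨ̃ = ι(exΨ)` for the interval `[u₀, ⊤]`. -/
def exPsiTildeFrom (rk : P → ℕ) (u₀ : P) : NCPoly := iota (exPsiFrom rk u₀)

/-- `Ψ̃ = ι(Ψ)` for the interval `[u₀, ⊤]`. -/
def psiTildeFrom (rk : P → ℕ) (u₀ : P) : NCPoly := iota (psiFrom rk u₀)

open Classical in
/-- The flag `f`-vector `α(S)`: the number of maximal chains of the rank-selected subposet,
i.e. of chains `C_1 < ⋯ < C_k < C_{k+1} = ⊤` with `{rk(C_1), …, rk(C_k)} = S`. -/
def flagAlpha (rk : P → ℕ) (S : Finset ℕ) : ℕ :=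
  ∑ k ∈ Finset.range (Fintype.card P),
    (Finset.univ.filter fun c : Fin (k + 1) → P =>
      StrictMono c ∧ c (Fin.last k) = (⊤ : P) ∧
        (Finset.univ.image fun i : Fin k => rk (c i.castSucc)) = S).card

/-- The flag `h`-vector `β(T) = ∑_{S ⊆ T} (-1)^{|T∖S|} α(S)`. -/
def flagBeta (rk : P → ℕ) (T : Finset ℕ) : ℤ :=
  ∑ S ∈ T.powerset, (-1 : ℤ) ^ (T \ S).card * (flagAlpha rk S : ℤ)

/-- An `R`-labeling of the graded poset `P`: every nontrivial interval `[u,w]` has a unique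
maximal (i.e. saturated) chain with weakly increasing labels. -/
def IsRLabeling (rk : P → ℕ) (lab : P → P → ℤ) : Prop :=
  ∀ u w : P, u < w →
    ∃! c : Fin (rk w - rk u + 1) → P,
      c 0 = u ∧ c (Fin.last (rk w - rk u)) = w ∧
        (∀ i : Fin (rk w - rk u), c i.castSucc ⋖ c i.succ) ∧
        ∀ i j : Fin (rk w - rk u), i ≤ j →
          lab (c i.castSucc) (c i.succ) ≤ lab (c j.castSucc) (c j.succ)

/-- The label sequence `(λ_0, …, λ_n)` of a maximal chain `c` with sign-set `E`:
`λ_0 = 0` and `λ_i = ±λ(c_{i-1}, c_i)`, negative exactly when `i ∈ E`. -/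
def lamSeq {n : ℕ} (lab : P → P → ℤ) (c : Fin (n + 1) → P) (E : Finset ℕ) :
    Fin (n + 1) → ℤ :=
  fun j =>
    if j = 0 then 0
    else (if (j : ℕ) ∈ E then -1 else 1) * lab (c ⟨j.1 - 1, by omega⟩) (c j)

/-- The `ab`-monomial `m(M,E) = m_0 ⋯ m_{n-1}` with `m_i = b` if `λ_i > λ_{i+1}`
and `m_i = a` if `λ_i ≤ λ_{i+1}`. -/
def rlabWord {n : ℕ} (lab : P → P → ℤ) (c : Fin (n + 1) → P) (E : Finset ℕ) :
    FreeMonoid Bool :=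
  FreeMonoid.ofList
    (List.ofFn fun i : Fin n => decide (lamSeq lab c E i.succ < lamSeq lab c E i.castSucc))

end

section OmegaProof

lemma ow_append_false (w v : List Bool) :
    omegaWord (w ++ false :: v) = omegaWord w * omegaWord (false :: v) := by
  induction w using omegaWord.induct with
  | case1 => simp [omegaWord]
  | case2 rest ih => simp [omegaWord, ih, mul_assoc]
  | case3 rest h ih =>
      match rest, h, ih with
      | [], _, _ => simp [omegaWord, mul_assoc]
      | false :: r, _, ih => simp [omegaWord, mul_assoc] at ih ⊢; rw [ih]; exact Or.inl rfl
      | true :: r, h, _ => exact (h r rfl).elim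
  | case4 rest ih => simp [omegaWord, ih, mul_assoc]

lemma ow_append_true (w v : List Bool) :
    omegaWord ((w ++ [true]) ++ v) = omegaWord (w ++ [true]) * omegaWord v := by
  induction w using omegaWord.induct with
  | case1 => simp [omegaWord]
  | case2 rest ih => simp only [List.append_assoc, List.singleton_append] at ih; simp [omegaWord, ih, mul_assoc]
  | case3 rest h ih =>
      match rest, h, ih with
      | [], _, _ => simp [omegaWord, mul_assoc]
      | false :: r, _, ih => simp only [List.append_assoc, List.singleton_append] at ih; simp [omegaWord, mul_assoc] at ih ⊢; rw [ih]; exact Or.inl rfl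
      | true :: r, h, _ => exact (h r rfl).elim
  | case4 rest ih => simp only [List.append_assoc, List.singleton_append] at ih; simp [omegaWord, ih, mul_assoc]

lemma omega_zero : omega 0 = 0 := by
  rw [omega, MonoidAlgebra.coeff_zero]; exact Finsupp.sum_zero_index

lemma omega_add (f g : NCPoly) : omega (f + g) = omega f + omega g := by
  rw [omega, omega, omega, MonoidAlgebra.coeff_add]; exact
  Finsupp.sum_add_index' (fun w => zero_smul _ _) (fun w b c => add_smul b c _)

lemma omega_single (w : FreeMonoid Bool) (c : NCR) :
    omega (MonoidAlgebra.single w c) = c • omegaWord (FreeMonoid.toList w) := by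
  rw [omega, MonoidAlgebra.coeff_single]; exact
  Finsupp.sum_single_index (zero_smul _ _)

lemma omega_neg (f : NCPoly) : omega (-f) = - omega f := by
  have h := omega_add f (-f)
  rw [add_neg_cancel, omega_zero] at h
  exact eq_neg_of_add_eq_zero_right h.symm

lemma omega_sub (f g : NCPoly) : omega (f - g) = omega f - omega g := by
  rw [sub_eq_add_neg, omega_add, omega_neg, sub_eq_add_neg]

lemma omega_mul_single_eq (m₁ m₂ : FreeMonoid Bool) (u : NCPoly)
    (h : ∀ w : List Bool,
      omegaWord (w ++ FreeMonoid.toList m₂) = omegaWord (w ++ FreeMonoid.toList m₁) * u)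
    (f : NCPoly) :
    omega (f * MonoidAlgebra.single m₂ (1:NCR)) = omega (f * MonoidAlgebra.single m₁ (1:NCR)) * u := by
  induction f using MonoidAlgebra.induction with
  | zero => simp [omega_zero]
  | single_add a b f ha hb ih =>
      rw [add_mul, add_mul, omega_add, omega_add, add_mul, ih]
      congr 1
      have e1 : MonoidAlgebra.single (R := NCR) a b * MonoidAlgebra.single m₂ (1:NCR)
          = MonoidAlgebra.single (a * m₂) b := by
        rw [MonoidAlgebra.single_mul_single, mul_one]
      have e2 : MonoidAlgebra.single (R := NCR) a b * MonoidAlgebra.single m₁ (1:NCR)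
          = MonoidAlgebra.single (a * m₁) b := by
        rw [MonoidAlgebra.single_mul_single, mul_one]
      rw [e1, e2, omega_single, omega_single, FreeMonoid.toList_mul, FreeMonoid.toList_mul,
        h, smul_mul_assoc]

lemma Aa_eq : Aa = MonoidAlgebra.single (FreeMonoid.of false) (1:NCR) := rfl
lemma Bb_eq : Bb = MonoidAlgebra.single (FreeMonoid.of true) (1:NCR) := rfl

lemma omega_mul_Aa (f : NCPoly) :
    omega (f * Aa) = omega f * (Aa + (X : NCR) • Bb) := by
  have := omega_mul_single_eq 1 (FreeMonoid.of false) (Aa + (X : NCR) • Bb)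
    (fun w => by simpa [omegaWord] using ow_append_false w []) f
  simpa [Aa_eq, ← MonoidAlgebra.one_def] using this

lemma omega_mul_AaBb (f : NCPoly) :
    omega (f * (Aa * Bb)) =
      omega f * (((1 + X : NCR)) • (Aa * Bb) + ((X + X ^ 2 : NCR)) • (Bb * Aa)) := by
  have := omega_mul_single_eq 1 (FreeMonoid.of false * FreeMonoid.of true)
    (((1 + X : NCR)) • (Aa * Bb) + ((X + X ^ 2 : NCR)) • (Bb * Aa))
    (fun w => by simpa [omegaWord] using ow_append_false w [true]) f
  have e : MonoidAlgebra.single (FreeMonoid.of false * FreeMonoid.of true) (1:NCR)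
      = Aa * Bb := by
    rw [Aa_eq, Bb_eq, MonoidAlgebra.single_mul_single, mul_one]
  rw [e] at this
  simpa [← MonoidAlgebra.one_def] using this

lemma omega_mul_BbBb (f : NCPoly) :
    omega (f * Bb * Bb) = omega (f * Bb) * (Bb + (X : NCR) • Aa) := by
  have := omega_mul_single_eq (FreeMonoid.of true) (FreeMonoid.of true * FreeMonoid.of true)
    (Bb + (X : NCR) • Aa)
    (fun w => by
      have h2 := ow_append_true w [true]
      simpa [omegaWord, List.append_assoc] using h2) f
  have e : MonoidAlgebra.single (FreeMonoid.of true * FreeMonoid.of true) (1:NCR)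
      = Bb * Bb := by
    rw [Bb_eq, MonoidAlgebra.single_mul_single, mul_one]
  rw [e, ← Bb_eq, ← mul_assoc] at this
  exact this

lemma omega_one : omega 1 = 1 := by
  rw [MonoidAlgebra.one_def]
  change omega (MonoidAlgebra.single 1 (1:NCR)) = 1
  rw [omega_single]
  simp [omegaWord, FreeMonoid.toList_one]

lemma omega_Bb : omega Bb = Bb + (X : NCR) • Aa := by
  rw [Bb_eq]
  change omega (MonoidAlgebra.single (FreeMonoid.of true) (1:NCR)) = _
  rw [omega_single]
  simp [omegaWord, FreeMonoid.toList_of, ← Bb_eq, ← Aa_eq]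

lemma pair (k : ℕ) :
    omega ((Aa - Bb) ^ k) = (∑ i ∈ Finset.range (k+1), (-X : NCR) ^ i) • (Aa - Bb) ^ k ∧
    omega ((Aa - Bb) ^ k * Bb) = (Aa - Bb) ^ k * (Bb - ((-X : NCR) ^ (k+1)) • Aa) := by
  induction k with
  | zero =>
      refine ⟨by simp [omega_one], ?_⟩
      simp [omega_Bb, neg_smul, sub_neg_eq_add]
  | succ k ih =>
      obtain ⟨ihH, ihG⟩ := ih
      set c : NCR := ∑ i ∈ Finset.range (k+1), (-X) ^ i with hc
      have hcs : ∑ i ∈ Finset.range (k+1+1), (-X : NCR) ^ i = c + (-X) ^ (k+1) :=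
        Finset.sum_range_succ _ _
      have ht : ((-X : NCR)) ^ (k+1) = 1 - (1 + X) * c := by
        have h := geom_sum_mul (-X : NCR) (k+1)
        rw [← hc] at h
        linear_combination -h
      constructor
      · have e : (Aa - Bb) ^ (k+1) = (Aa - Bb) ^ k * Aa - (Aa - Bb) ^ k * Bb := by
          rw [pow_succ, mul_sub]
        rw [e, omega_sub, omega_mul_Aa, ihH, ihG, hcs, ht]
        simp only [mul_add, mul_sub, sub_mul, add_mul, smul_mul_assoc, mul_smul_comm,
          mul_assoc]
        module
      · have e2 : (Aa - Bb) ^ (k+1) * Bb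
            = (Aa - Bb) ^ k * (Aa * Bb) - (Aa - Bb) ^ k * Bb * Bb := by
          rw [pow_succ, mul_assoc, sub_mul, mul_sub, mul_assoc]
        rw [e2, omega_sub, omega_mul_AaBb, omega_mul_BbBb, ihH, ihG]
        rw [show k + 1 + 1 = (k + 1) + 1 from rfl, pow_succ ((-X : NCR)) (k+1), ht,
          pow_succ (Aa - Bb) k]
        simp only [mul_add, mul_sub, sub_mul, add_mul, smul_mul_assoc, mul_smul_comm,
          mul_assoc]
        module

end OmegaProof

/-- `ω((a-b)^k·b) = (a-b)^k·(b - (-y)^{k+1}·a)` in `ℤ[y]⟨a,b⟩`. -/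
theorem omega_pow_sub_mul_b (k : ℕ) :
    omega ((Aa - Bb) ^ k * Bb) =
      (Aa - Bb) ^ k * (Bb - ((-X : Polynomial ℤ) ^ (k + 1)) • Aa) := (pair k).2
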